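/- Let (Ω, P) be a probability space, let X : Ω → ℝ be an integrable random variable whose cumulative distribution function F(x) = P(X ≤ x) is continuous on ℝ and strictly monotone (strictly increasing), let τ ∈ (0, 1), and let q ∈ ℝ satisfy F(q) = τ. Define h(y) = ∫ ( y − (1/τ) · max(y − X(ω), 0) ) dP(ω). If v ∈ ℝ satisfies h(v) = h(q), then v = q. -/

import Mathlib

open MeasureTheory

theorem aux {Ω : Type*} [MeasurableSpace Ω] (P : Measure Ω) [IsProbabilityMeasure P]
    (X : Ω → ℝ) (hX : Integrable X P) (hXm : Measurable X)
    (F : ℝ → ℝ) (hF : ∀ x, F x = (P {ω | X ω ≤ x}).toReal)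
    (hFm : StrictMono F)
    (τ : ℝ) (hτ : τ ∈ Set.Ioo (0:ℝ) 1)
    (q : ℝ) (hq : F q = τ)
    (v : ℝ)
    (hv : ∫ ω, (v - (1 / τ) * max (v - X ω) 0) ∂P = ∫ ω, (q - (1 / τ) * max (q - X ω) 0) ∂P) :
    v = q := by
  have hτ0 : 0 < τ := hτ.1
  have hInt : ∀ y : ℝ, Integrable (fun ω => max (y - X ω) 0) P :=
    fun y => ((integrable_const y).sub hX).pos_part
  have hIeq : ∀ y : ℝ, ∫ ω, (y - (1/τ) * max (y - X ω) 0) ∂P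
      = y - (1/τ) * ∫ ω, max (y - X ω) 0 ∂P := by
    intro y
    rw [integral_sub (integrable_const y) ((hInt y).const_mul (1/τ)), integral_const,
      integral_const_mul]
    simp
  have key : (∫ ω, max (v - X ω) 0 ∂P) - (∫ ω, max (q - X ω) 0 ∂P) = τ * (v - q) := by
    rw [hIeq v, hIeq q] at hv
    have hτne : τ ≠ 0 := ne_of_gt hτ0
    field_simp at hv
    linarith
  rcases lt_trichotomy v q with hlt | heq | hgt
  · -- v < q : contradiction
    exfalso
    set m := (v + q) / 2 with hm
    have hvm : v < m := by simp [hm]; linarith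
    have hmq : m < q := by simp [hm]; linarith
    set S : Set Ω := {ω | X ω ≤ m} \ {ω | X ω ≤ v} with hS
    have hSpos : 0 < P S := by
      rcases (show (0:ENNReal) ≤ P S from zero_le).lt_or_eq with h' | h'
      · exact h'
      · exfalso
        have hle : P {ω | X ω ≤ m} ≤ P {ω | X ω ≤ v} := by
          calc P {ω | X ω ≤ m} ≤ P ({ω | X ω ≤ v} ∪ S) := by
                apply measure_mono
                intro ω hω
                by_cases h2 : X ω ≤ v
                · exact Or.inl h2
                · exact Or.inr ⟨hω, h2⟩
            _ ≤ P {ω | X ω ≤ v} + P S := measure_union_le _ _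
            _ = P {ω | X ω ≤ v} := by rw [← h', add_zero]
        have : F m ≤ F v := by
          rw [hF m, hF v]
          exact ENNReal.toReal_mono (measure_ne_top P _) hle
        exact absurd (hFm hvm) (not_lt.2 this)
    set g : Ω → ℝ := fun ω =>
      Set.indicator {ω | X ω < q} (fun _ => q - v) ω - (max (q - X ω) 0 - max (v - X ω) 0)
      with hgdef
    have hg0 : ∀ ω, 0 ≤ g ω := by
      intro ω
      by_cases hω : X ω < q
      · have habs := abs_max_sub_max_le_abs (q - X ω) (v - X ω) (0:ℝ)
        have h2 : max (q - X ω) 0 - max (v - X ω) 0 ≤ |q - X ω - (v - X ω)| :=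
          le_trans (le_abs_self _) habs
        have h3 : |q - X ω - (v - X ω)| = q - v := by
          rw [abs_of_nonneg] <;> [ring_nf; linarith]
        rw [hgdef]
        simp only [Set.indicator_of_mem (show ω ∈ {ω | X ω < q} from hω)]
        linarith
      · push_neg at hω
        have h1 : max (q - X ω) 0 = 0 := max_eq_right (by linarith)
        have h2 : max (v - X ω) 0 = 0 := max_eq_right (by linarith)
        rw [hgdef]
        simp only [Set.indicator_of_notMem (show ω ∉ {ω | X ω < q} from by
          simp only [Set.mem_setOf_eq, not_lt]; exact hω), h1, h2]
        linarith
    have hgS : ∀ ω ∈ S, 0 < g ω := by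
      intro ω hω
      obtain ⟨h1, h2⟩ := hω
      simp only [Set.mem_setOf_eq] at h1 h2
      push_neg at h2
      have hlt2 : X ω < q := lt_of_le_of_lt h1 hmq
      have hmax1 : max (q - X ω) 0 = q - X ω := max_eq_left (by linarith)
      have hmax2 : max (v - X ω) 0 = 0 := max_eq_right (by linarith)
      rw [hgdef]
      simp only [Set.indicator_of_mem (show ω ∈ {ω | X ω < q} from hlt2), hmax1, hmax2]
      linarith
    have hmeasQ : MeasurableSet {ω | X ω < q} := measurableSet_lt hXm measurable_const
    have hgInt : Integrable g P :=
      ((integrable_const (q - v)).indicator hmeasQ).sub ((hInt q).sub (hInt v))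
    have hpos : 0 < ∫ ω, g ω ∂P := by
      rw [integral_pos_iff_support_of_nonneg hg0 hgInt]
      refine lt_of_lt_of_le hSpos (measure_mono fun ω hω => ?_)
      exact (hgS ω hω).ne'
    have hcomp : ∫ ω, g ω ∂P =
        (q - v) * (P {ω | X ω < q}).toReal
          - ((∫ ω, max (q - X ω) 0 ∂P) - (∫ ω, max (v - X ω) 0 ∂P)) := by
      have hind : Integrable (fun ω => Set.indicator {ω | X ω < q} (fun _ => q - v) ω) P :=
        (integrable_const (q - v)).indicator hmeasQ
      have hd : Integrable (fun ω => max (q - X ω) 0 - max (v - X ω) 0) P :=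
        (hInt q).sub (hInt v)
      rw [hgdef]
      rw [integral_sub hind hd, integral_sub (hInt q) (hInt v),
        integral_indicator hmeasQ, setIntegral_const, smul_eq_mul, mul_comm]
      rfl
    have hle : (P {ω | X ω < q}).toReal ≤ τ := by
      rw [← hq, hF q]
      exact ENNReal.toReal_mono (measure_ne_top P _)
        (measure_mono fun ω hω => le_of_lt (show X ω < q from hω))
    rw [hcomp] at hpos
    nlinarith [hpos, key, hle]
  · exact heq
  · -- q < v : contradiction
    exfalso
    set m := (q + v) / 2 with hm
    have hqm : q < m := by simp [hm]; linarith
    have hmv : m < v := by simp [hm]; linarith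
    set S : Set Ω := {ω | X ω ≤ m} \ {ω | X ω ≤ q} with hS
    have hSpos : 0 < P S := by
      rcases (show (0:ENNReal) ≤ P S from zero_le).lt_or_eq with h' | h'
      · exact h'
      · exfalso
        have hle : P {ω | X ω ≤ m} ≤ P {ω | X ω ≤ q} := by
          calc P {ω | X ω ≤ m} ≤ P ({ω | X ω ≤ q} ∪ S) := by
                apply measure_mono
                intro ω hω
                by_cases h2 : X ω ≤ q
                · exact Or.inl h2
                · exact Or.inr ⟨hω, h2⟩
            _ ≤ P {ω | X ω ≤ q} + P S := measure_union_le _ _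
            _ = P {ω | X ω ≤ q} := by rw [← h', add_zero]
        have : F m ≤ F q := by
          rw [hF m, hF q]
          exact ENNReal.toReal_mono (measure_ne_top P _) hle
        exact absurd (hFm hqm) (not_lt.2 this)
    set g : Ω → ℝ := fun ω =>
      (max (v - X ω) 0 - max (q - X ω) 0) - Set.indicator {ω | X ω ≤ q} (fun _ => v - q) ω
      with hgdef
    have hg0 : ∀ ω, 0 ≤ g ω := by
      intro ω
      by_cases hω : X ω ≤ q
      · have h1 : max (v - X ω) 0 = v - X ω := max_eq_left (by linarith)
        have h2 : max (q - X ω) 0 = q - X ω := max_eq_left (by linarith)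
        rw [hgdef]
        simp only [Set.indicator_of_mem (show ω ∈ {ω | X ω ≤ q} from hω), h1, h2]
        linarith
      · push_neg at hω
        have h1 : max (q - X ω) 0 ≤ max (v - X ω) 0 :=
          max_le_max (by linarith) le_rfl
        rw [hgdef]
        simp only [Set.indicator_of_notMem (show ω ∉ {ω | X ω ≤ q} from by
          simp only [Set.mem_setOf_eq, not_le]; exact hω)]
        linarith
    have hgS : ∀ ω ∈ S, 0 < g ω := by
      intro ω hω
      obtain ⟨h1, h2⟩ := hω
      simp only [Set.mem_setOf_eq] at h1 h2
      push_neg at h2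
      have hmax1 : max (v - X ω) 0 = v - X ω := max_eq_left (by linarith)
      have hmax2 : max (q - X ω) 0 = 0 := max_eq_right (by linarith)
      rw [hgdef]
      simp only [Set.indicator_of_notMem (show ω ∉ {ω | X ω ≤ q} from by
        simp only [Set.mem_setOf_eq, not_le]; exact h2), hmax1, hmax2]
      linarith
    have hmeasQ : MeasurableSet {ω | X ω ≤ q} := measurableSet_le hXm measurable_const
    have hgInt : Integrable g P :=
      ((hInt v).sub (hInt q)).sub ((integrable_const (v - q)).indicator hmeasQ)
    have hpos : 0 < ∫ ω, g ω ∂P := by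
      rw [integral_pos_iff_support_of_nonneg hg0 hgInt]
      refine lt_of_lt_of_le hSpos (measure_mono fun ω hω => ?_)
      exact (hgS ω hω).ne'
    have hcomp : ∫ ω, g ω ∂P =
        ((∫ ω, max (v - X ω) 0 ∂P) - (∫ ω, max (q - X ω) 0 ∂P))
          - (v - q) * (P {ω | X ω ≤ q}).toReal := by
      have hind : Integrable (fun ω => Set.indicator {ω | X ω ≤ q} (fun _ => v - q) ω) P :=
        (integrable_const (v - q)).indicator hmeasQ
      have hd : Integrable (fun ω => max (v - X ω) 0 - max (q - X ω) 0) P :=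
        (hInt v).sub (hInt q)
      rw [hgdef]
      rw [integral_sub hd hind, integral_sub (hInt v) (hInt q),
        integral_indicator hmeasQ, setIntegral_const, smul_eq_mul, mul_comm]
      rfl
    have hPq : (P {ω | X ω ≤ q}).toReal = τ := by rw [← hq, hF q]
    rw [hcomp, hPq, key] at hpos
    nlinarith [hpos]

theorem var_recoverable_from_cvar
    {Ω : Type*} [MeasurableSpace Ω] (P : Measure Ω) [IsProbabilityMeasure P]
    (X : Ω → ℝ) (hX : Integrable X P)
    (F : ℝ → ℝ) (hF : ∀ x, F x = (P {ω | X ω ≤ x}).toReal)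
    (hFc : Continuous F) (hFm : StrictMono F)
    (τ : ℝ) (hτ : τ ∈ Set.Ioo (0 : ℝ) 1)
    (q : ℝ) (hq : F q = τ)
    (h : ℝ → ℝ)
    (hh : ∀ y, h y = ∫ ω, (y - (1 / τ) * max (y - X ω) 0) ∂P)
    (v : ℝ) (hv : h v = h q) :
    v = q := by
  have hXae : AEMeasurable X P := hX.aemeasurable
  set X' : Ω → ℝ := hXae.mk X with hX'def
  have hX'm : Measurable X' := hXae.measurable_mk
  have hXeq : X =ᵐ[P] X' := hXae.ae_eq_mk
  have hX' : Integrable X' P := hX.congr hXeq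
  have hF' : ∀ x, F x = (P {ω | X' ω ≤ x}).toReal := by
    intro x
    rw [hF x]
    congr 1
    apply measure_congr
    filter_upwards [hXeq] with ω hω
    show (X ω ≤ x) = (X' ω ≤ x)
    rw [hω]
  have hcong : ∀ y : ℝ, ∫ ω, (y - (1 / τ) * max (y - X ω) 0) ∂P
      = ∫ ω, (y - (1 / τ) * max (y - X' ω) 0) ∂P := by
    intro y
    apply integral_congr_ae
    filter_upwards [hXeq] with ω hω
    rw [hω]
  have hv' : ∫ ω, (v - (1 / τ) * max (v - X' ω) 0) ∂P
      = ∫ ω, (q - (1 / τ) * max (q - X' ω) 0) ∂P := by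
    rw [← hcong v, ← hcong q, ← hh v, ← hh q]; exact hv
  exact aux P X' hX' hX'm F hF' hFm τ hτ q hq v hv'
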